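/- Let I, J be homogeneous binomial ideals in k[x_0,...,x_n] generated respectively by {a_i X^{α_i} - b_i X^{β_i}} and {c_i X^{α_i} - d_i X^{β_i}} for i = 1,...,s (same exponents, all coefficients nonzero). Let K be the ideal of S = k[x_0,...,x_n,y_0,...,y_n,z_0,...,z_n] generated by the polynomials a_i Y^{α_i} - b_i Y^{β_i}, c_i Z^{α_i} - d_i Z^{β_i} (i=1,...,s), and x_j - y_j z_j (j=0,...,n). Then for each i, the binomial a_i c_i X^{α_i} - b_i d_i X^{β_i} lies in K (hence in the elimination ideal K ∩ k[x_0,...,x_n]). -/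

import Mathlib

open MvPolynomial


lemma prod_sub_prod_mem_aux {R : Type*} [CommRing R] (I : Ideal R) {ι : Type*} [DecidableEq ι]
    (t : Finset ι) (f g : ι → R) (h : ∀ i ∈ t, f i - g i ∈ I) :
    (∏ i ∈ t, f i) - ∏ i ∈ t, g i ∈ I := by
  induction t using Finset.induction_on with
  | empty => simp
  | insert _ _ hx ih =>
    rename_i x t'
    rw [Finset.prod_insert hx, Finset.prod_insert hx]
    have h1 : f x - g x ∈ I := h x (Finset.mem_insert_self _ _)
    have h2 : (∏ i ∈ t', f i) - ∏ i ∈ t', g i ∈ I :=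
      ih fun i hi => h i (Finset.mem_insert_of_mem hi)
    have heq : f x * ∏ i ∈ t', f i - g x * ∏ i ∈ t', g i
        = (f x - g x) * ∏ i ∈ t', f i + g x * ((∏ i ∈ t', f i) - ∏ i ∈ t', g i) := by ring
    rw [heq]
    exact Ideal.add_mem _ (Ideal.mul_mem_right _ _ h1) (Ideal.mul_mem_left _ _ h2)

/-- Let `I, J ⊆ k[x_0,…,x_n]` be homogeneous binomial ideals generated by
`a_i X^{α_i} - b_i X^{β_i}` and `c_i X^{α_i} - d_i X^{β_i}` respectively (same exponents, all
coefficients nonzero).  Let `K` be the ideal of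
`S = k[x_0,…,x_n,y_0,…,y_n,z_0,…,z_n]` generated by the `a_i Y^{α_i} - b_i Y^{β_i}`, the
`c_i Z^{α_i} - d_i Z^{β_i}`, and the `x_j - y_j z_j`.  Then for each `i`, the binomial
`a_i c_i X^{α_i} - b_i d_i X^{β_i}` lies in `K` (hence in `K ∩ k[x_0,…,x_n]`). -/
theorem stmt_14 {k : Type*} [Field k] (n s : ℕ)
    (a b c d : Fin s → k)
    (ha : ∀ i, a i ≠ 0) (hb : ∀ i, b i ≠ 0) (hc : ∀ i, c i ≠ 0) (hd : ∀ i, d i ≠ 0)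
    (α β : Fin s → (Fin (n + 1) → ℕ))
    (Xm Ym Zm : (Fin (n + 1) → ℕ) →
      MvPolynomial (Fin (n + 1) ⊕ Fin (n + 1) ⊕ Fin (n + 1)) k)
    (hXm : ∀ γ, Xm γ = ∏ i, X (Sum.inl i) ^ γ i)
    (hYm : ∀ γ, Ym γ = ∏ i, X (Sum.inr (Sum.inl i)) ^ γ i)
    (hZm : ∀ γ, Zm γ = ∏ i, X (Sum.inr (Sum.inr i)) ^ γ i)
    (K : Ideal (MvPolynomial (Fin (n + 1) ⊕ Fin (n + 1) ⊕ Fin (n + 1)) k))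
    (hK : K = Ideal.span
      ({f | ∃ i, f = C (a i) * Ym (α i) - C (b i) * Ym (β i)} ∪
       {f | ∃ i, f = C (c i) * Zm (α i) - C (d i) * Zm (β i)} ∪
       {f | ∃ j : Fin (n + 1),
          f = X (Sum.inl j) - X (Sum.inr (Sum.inl j)) * X (Sum.inr (Sum.inr j))})) :
    ∀ i, C (a i * c i) * Xm (α i) - C (b i * d i) * Xm (β i) ∈ K := by
  subst hK
  intro i
  have hmono : ∀ γ : Fin (n+1) → ℕ, Xm γ - Ym γ * Zm γ ∈ Ideal.span
      ({f | ∃ i, f = C (a i) * Ym (α i) - C (b i) * Ym (β i)} ∪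
       {f | ∃ i, f = C (c i) * Zm (α i) - C (d i) * Zm (β i)} ∪
       {f | ∃ j : Fin (n + 1),
          f = X (Sum.inl j) - X (Sum.inr (Sum.inl j)) * X (Sum.inr (Sum.inr j))}) := by
    intro γ
    rw [hXm, hYm, hZm, ← Finset.prod_mul_distrib]
    apply prod_sub_prod_mem_aux
    intro j _
    have hj : (X (Sum.inl j) - X (Sum.inr (Sum.inl j)) * X (Sum.inr (Sum.inr j)) :
        MvPolynomial (Fin (n + 1) ⊕ Fin (n + 1) ⊕ Fin (n + 1)) k) ∈ Ideal.span ({f | ∃ i, f = C (a i) * Ym (α i) - C (b i) * Ym (β i)} ∪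
       {f | ∃ i, f = C (c i) * Zm (α i) - C (d i) * Zm (β i)} ∪
       {f | ∃ j : Fin (n + 1),
          f = X (Sum.inl j) - X (Sum.inr (Sum.inl j)) * X (Sum.inr (Sum.inr j))}) :=
      Ideal.subset_span (Or.inr ⟨j, rfl⟩)
    have hdvd : (X (Sum.inl j) - X (Sum.inr (Sum.inl j)) * X (Sum.inr (Sum.inr j)) :
        MvPolynomial (Fin (n + 1) ⊕ Fin (n + 1) ⊕ Fin (n + 1)) k) ∣
        X (Sum.inl j) ^ γ j - (X (Sum.inr (Sum.inl j)) * X (Sum.inr (Sum.inr j))) ^ γ j :=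
      sub_dvd_pow_sub_pow _ _ _
    obtain ⟨q, hq⟩ := hdvd
    rw [← mul_pow, hq]
    exact Ideal.mul_mem_right _ _ hj
  have hY : C (a i) * Ym (α i) - C (b i) * Ym (β i) ∈ Ideal.span ({f | ∃ i, f = C (a i) * Ym (α i) - C (b i) * Ym (β i)} ∪
       {f | ∃ i, f = C (c i) * Zm (α i) - C (d i) * Zm (β i)} ∪
       {f | ∃ j : Fin (n + 1),
          f = X (Sum.inl j) - X (Sum.inr (Sum.inl j)) * X (Sum.inr (Sum.inr j))}) :=
    Ideal.subset_span (Or.inl (Or.inl ⟨i, rfl⟩))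
  have hZ : C (c i) * Zm (α i) - C (d i) * Zm (β i) ∈ Ideal.span ({f | ∃ i, f = C (a i) * Ym (α i) - C (b i) * Ym (β i)} ∪
       {f | ∃ i, f = C (c i) * Zm (α i) - C (d i) * Zm (β i)} ∪
       {f | ∃ j : Fin (n + 1),
          f = X (Sum.inl j) - X (Sum.inr (Sum.inl j)) * X (Sum.inr (Sum.inr j))}) :=
    Ideal.subset_span (Or.inl (Or.inr ⟨i, rfl⟩))
  have key : C (a i * c i) * Xm (α i) - C (b i * d i) * Xm (β i)
      = C (a i * c i) * (Xm (α i) - Ym (α i) * Zm (α i))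
        - C (b i * d i) * (Xm (β i) - Ym (β i) * Zm (β i))
        + C (c i) * Zm (α i) * (C (a i) * Ym (α i) - C (b i) * Ym (β i))
        + C (b i) * Ym (β i) * (C (c i) * Zm (α i) - C (d i) * Zm (β i)) := by
    rw [map_mul, map_mul]; ring
  rw [key]
  exact add_mem (add_mem (sub_mem (Ideal.mul_mem_left _ _ (hmono (α i)))
    (Ideal.mul_mem_left _ _ (hmono (β i)))) (Ideal.mul_mem_left _ _ hY))
    (Ideal.mul_mem_left _ _ hZ)
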